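/- Define h(z) = exp(iz)·sinh(z³). For every ε > 0 there exists r₀ > 1 such that for all z = r·e^{iθ} with r ≥ r₀ and |θ − π/2| ≤ 1/(r² log r), one has |h(z)| ≤ exp(−r/4) < ε. -/

import Mathlib

open Real

lemma abs_sinh_le' (w : ℂ) : ‖Complex.sinh w‖ ≤ Real.exp |w.re| := by
  rw [show Complex.sinh w = (Complex.exp w - Complex.exp (-w)) / 2 from rfl]
  have h1 : ‖Complex.exp w - Complex.exp (-w)‖ ≤
      Real.exp w.re + Real.exp (-w.re) := by
    calc ‖Complex.exp w - Complex.exp (-w)‖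
        ≤ ‖Complex.exp w‖ + ‖Complex.exp (-w)‖ :=
          norm_sub_le _ _
      _ = Real.exp w.re + Real.exp (-w.re) := by
          rw [Complex.norm_exp, Complex.norm_exp, Complex.neg_re]
  have h2 : Real.exp w.re ≤ Real.exp |w.re| := Real.exp_le_exp.2 (le_abs_self _)
  have h3 : Real.exp (-w.re) ≤ Real.exp |w.re| := Real.exp_le_exp.2 (neg_le_abs _)
  calc ‖(Complex.exp w - Complex.exp (-w)) / 2‖
      = ‖Complex.exp w - Complex.exp (-w)‖ / 2 := by
        rw [norm_div]; norm_num
    _ ≤ (Real.exp w.re + Real.exp (-w.re)) / 2 := by linarith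
    _ ≤ Real.exp |w.re| := by linarith

theorem stmt_16 :
    ∀ ε > (0:ℝ), ∃ r₀ > (1:ℝ), ∀ z : ℂ, r₀ ≤ ‖z‖ →
      |Complex.arg z - π / 2| ≤ 1 / ((‖z‖) ^ 2 * Real.log (‖z‖)) →
      ‖Complex.exp (Complex.I * z) * Complex.sinh (z ^ 3)‖
          ≤ Real.exp (-(‖z‖) / 4) ∧
        Real.exp (-(‖z‖) / 4) < ε := by
  intro ε hε
  refine ⟨max (Real.exp 12) (4 * Real.log (1/ε) + 1), ?_, ?_⟩
  · exact lt_of_lt_of_le (by nlinarith [Real.add_one_le_exp (12:ℝ)]) (le_max_left _ _)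
  intro z hr hθ
  set r := ‖z‖ with hrdef
  set θ := Complex.arg z with hθdef
  have hr12 : Real.exp 12 ≤ r := le_trans (le_max_left _ _) hr
  have hrε : 4 * Real.log (1/ε) + 1 ≤ r := le_trans (le_max_right _ _) hr
  have hr1 : (1:ℝ) < r := lt_of_lt_of_le (by nlinarith [Real.add_one_le_exp (12:ℝ)]) hr12
  have hr0 : (0:ℝ) < r := by linarith
  have hz : z ≠ 0 := by
    intro h; rw [h] at hrdef; simp at hrdef; linarith
  have hlog : (12:ℝ) ≤ Real.log r := by
    rw [show (12:ℝ) = Real.log (Real.exp 12) by rw [Real.log_exp]]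
    exact Real.log_le_log (Real.exp_pos _) hr12
  have hlogpos : (0:ℝ) < Real.log r := by linarith
  -- δ bound
  have hδ : 1 / (r ^ 2 * Real.log r) ≤ 1 / 12 := by
    rw [div_le_div_iff₀ (by positivity) (by norm_num)]
    nlinarith
  have hθ1 : |θ - π/2| ≤ 1/12 := le_trans hθ hδ
  -- key geometric facts
  have him : z.im = r * Real.sin θ := by
    have := Complex.sin_arg z
    field_simp [hz] at this
    linarith [this]
  have hsin : (1:ℝ)/2 ≤ Real.sin θ := by
    have h1 : Real.sin θ = Real.cos (θ - π/2) := by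
      rw [show θ - π/2 = -(π/2 - θ) by ring, Real.cos_neg, Real.cos_pi_div_two_sub]
    rw [h1]
    have := Real.one_sub_sq_div_two_le_cos (x := θ - π/2)
    have h2 : (θ - π/2)^2 ≤ (1/12)^2 := by
      have := sq_abs (θ - π/2)
      nlinarith [abs_nonneg (θ - π/2)]
    nlinarith
  -- z^3 real part
  have hz3 : (z ^ 3).re = r ^ 3 * Real.cos (3 * θ) := by
    have hzeq : z = (r : ℂ) * Complex.exp (θ * Complex.I) :=
      (Complex.norm_mul_exp_arg_mul_I z).symm
    rw [hzeq]
    rw [mul_pow, ← Complex.exp_nat_mul]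
    have : (3:ℕ) * ((θ:ℂ) * Complex.I) = ((3 * θ : ℝ) : ℂ) * Complex.I := by
      push_cast; ring
    rw [this, show ((r:ℂ))^3 = ((r^3 : ℝ):ℂ) by push_cast; ring,
      Complex.re_ofReal_mul, Complex.exp_ofReal_mul_I_re]
  have hcos3 : |Real.cos (3 * θ)| ≤ 3 * |θ - π/2| := by
    have h1 : Real.cos (3 * θ) = Real.sin (3 * (θ - π/2)) := by
      have : 3 * θ = 3 * (θ - π/2) + (π + π/2) := by ring
      rw [this, Real.cos_add, Real.cos_add, Real.sin_add]
      simp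
    rw [h1]
    calc |Real.sin (3 * (θ - π/2))| ≤ |3 * (θ - π/2)| := Real.abs_sin_le_abs
      _ = 3 * |θ - π/2| := by rw [abs_mul]; norm_num
  -- main bound
  have hmain : ‖Complex.exp (Complex.I * z) * Complex.sinh (z ^ 3)‖
      ≤ Real.exp (-(r * Real.sin θ) + r ^ 3 * |Real.cos (3*θ)|) := by
    rw [norm_mul, Complex.norm_exp]
    have hre : (Complex.I * z).re = -z.im := by simp
    rw [hre, him]
    rw [Real.exp_add]
    gcongr
    calc ‖Complex.sinh (z ^ 3)‖ ≤ Real.exp |(z ^ 3).re| := abs_sinh_le' _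
      _ ≤ Real.exp (r ^ 3 * |Real.cos (3*θ)|) := by
          apply Real.exp_le_exp.2
          rw [hz3, abs_mul, abs_of_nonneg (by positivity : (0:ℝ) ≤ r ^ 3)]
  have hexp : -(r * Real.sin θ) + r ^ 3 * |Real.cos (3*θ)| ≤ -r/4 := by
    have h1 : r ^ 3 * |Real.cos (3*θ)| ≤ r ^ 3 * (3 / (r ^ 2 * Real.log r)) := by
      gcongr
      calc |Real.cos (3*θ)| ≤ 3 * |θ - π/2| := hcos3
        _ ≤ 3 * (1 / (r ^ 2 * Real.log r)) := by gcongr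
        _ = 3 / (r ^ 2 * Real.log r) := by ring
    have h2 : r ^ 3 * (3 / (r ^ 2 * Real.log r)) = 3 * r / Real.log r := by
      field_simp
    have h3 : 3 * r / Real.log r ≤ r / 4 := by
      rw [div_le_div_iff₀ hlogpos (by norm_num)]
      nlinarith
    have h4 : r / 2 ≤ r * Real.sin θ := by nlinarith
    rw [h2] at h1
    linarith
  constructor
  · exact le_trans hmain (Real.exp_le_exp.2 hexp)
  · rw [show ε = Real.exp (Real.log ε) from (Real.exp_log hε).symm]
    apply Real.exp_lt_exp.2
    have : Real.log (1/ε) = - Real.log ε := by rw [one_div, Real.log_inv]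
    rw [this] at hrε
    linarith
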